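/- Let a > 0, v > 0, and let L be a real number with L ≥ v²/(2a). Let x : ℝ → ℝ be a differentiable function with x(0) = 0 and deriv x(0) = 0, such that deriv x is Lipschitz continuous with constant a and deriv x(t) ≤ v for all t ≥ 0. Then every T ≥ 0 with x(T) ≥ L satisfies T ≥ L/v + v/(2a) = (2aL + v²)/(2av). In particular, a vehicle starting from rest with acceleration rate at most a and speed at most v cannot completely cross an intersection route of length L in time less than (2aL + v²)/(2av). -/

import Mathlib

/-- A vehicle starting from rest whose speed `deriv x` is Lipschitz with
constant `a > 0` (maximum acceleration) and bounded above by `v > 0`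
(maximum allowed speed) cannot cover a distance `L ≥ v^2 / (2 * a)` in time
less than `L / v + v / (2 * a) = (2 * a * L + v^2) / (2 * a * v)`. -/
theorem crossing_time_lower_bound_long_route
    (a v L : ℝ) (ha : 0 < a) (hv : 0 < v) (hL : v ^ 2 / (2 * a) ≤ L)
    (x : ℝ → ℝ)
    (hdiff : Differentiable ℝ x)
    (hx0 : x 0 = 0) (hv0 : deriv x 0 = 0)
    (hlip : LipschitzWith ⟨a, ha.le⟩ (deriv x))
    (hspeed : ∀ t : ℝ, 0 ≤ t → deriv x t ≤ v) :
    ∀ T : ℝ, 0 ≤ T → L ≤ x T →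
      L / v + v / (2 * a) ≤ T ∧ L / v + v / (2 * a) = (2 * a * L + v ^ 2) / (2 * a * v) := by
  intro T hT hxT
  -- speed bound from Lipschitz: deriv x t ≤ a * t for t ≥ 0
  have hacc : ∀ t : ℝ, 0 ≤ t → deriv x t ≤ a * t := by
    intro t ht
    have := hlip.dist_le_mul t 0
    simp [Real.dist_eq, hv0, abs_of_nonneg ht] at this
    calc deriv x t ≤ |deriv x t| := le_abs_self _
      _ ≤ a * t := this
  -- x t ≤ a * t^2 / 2 on [0, ∞)
  have hpar : ∀ t : ℝ, 0 ≤ t → x t ≤ a * t ^ 2 / 2 := by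
    intro t ht
    set h : ℝ → ℝ := fun s => a * s ^ 2 / 2 - x s with hh
    have hd : ∀ s : ℝ, HasDerivAt h (a * s - deriv x s) s := by
      intro s
      have h1 : HasDerivAt (fun s : ℝ => a * s ^ 2 / 2) (a * s) s := by
        have := ((hasDerivAt_pow 2 s).const_mul a).div_const 2
        exact this.congr_deriv (by rw [show (2:ℕ) - 1 = 1 from rfl, pow_one]; push_cast; ring)
      exact h1.sub (hdiff s).hasDerivAt
    have hmono : MonotoneOn h (Set.Ici (0:ℝ)) := by
      apply monotoneOn_of_deriv_nonneg (convex_Ici 0)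
      · exact fun s _ => ((hd s).differentiableAt.continuousAt).continuousWithinAt
      · exact fun s _ => ((hd s).differentiableAt).differentiableWithinAt
      · intro s hs
        rw [(hd s).deriv]
        have hs0 : (0:ℝ) ≤ s := le_of_lt (by simpa using hs)
        linarith [hacc s hs0]
    have := hmono (Set.self_mem_Ici) (Set.mem_Ici.mpr ht) ht
    simp [hh, hx0] at this
    linarith
  -- x is nonincreasing relative to v * t
  have hlin : MonotoneOn (fun s => v * s - x s) (Set.Ici (0:ℝ)) := by
    have hd : ∀ s : ℝ, HasDerivAt (fun s => v * s - x s) (v - deriv x s) s := by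
      intro s
      exact (((hasDerivAt_id s).const_mul v).sub (hdiff s).hasDerivAt).congr_deriv (by simp)
    apply monotoneOn_of_deriv_nonneg (convex_Ici 0)
    · exact fun s _ => ((hd s).differentiableAt.continuousAt).continuousWithinAt
    · exact fun s _ => ((hd s).differentiableAt).differentiableWithinAt
    · intro s hs
      rw [(hd s).deriv]
      have hs0 : (0:ℝ) ≤ s := le_of_lt (by simpa using hs)
      linarith [hspeed s hs0]
  constructor
  · -- main bound
    by_cases hcase : v / a ≤ T
    · have h1 := hlin (Set.mem_Ici.mpr (le_of_lt (div_pos hv ha))) (Set.mem_Ici.mpr hT) hcase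
      have h2 := hpar (v / a) (le_of_lt (div_pos hv ha))
      simp only at h1
      have hva : x (v / a) ≤ v ^ 2 / (2 * a) := by
        have : a * (v / a) ^ 2 / 2 = v ^ 2 / (2 * a) := by
          field_simp
        linarith [h2, this ▸ h2]
      -- v * (v/a) - x(v/a) ≤ v * T - x T
      have key : x T ≤ v * T - v ^ 2 / (2 * a) := by
        have hvva : v * (v / a) = v ^ 2 / a := by field_simp
        have : v ^ 2 / a - v ^ 2 / (2 * a) = v ^ 2 / (2 * a) := by
          field_simp; ring
        nlinarith [h1, hva]
      have k2 : L + v ^ 2 / (2 * a) ≤ v * T := by linarith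
      have k3 : v ^ 2 / (2 * a) * (2 * a) = v ^ 2 := by field_simp
      rw [div_add_div _ _ (ne_of_gt hv) (ne_of_gt (by linarith : (0:ℝ) < 2 * a)), div_le_iff₀ (by positivity)]
      nlinarith [mul_le_mul_of_nonneg_right k2 (by linarith : (0:ℝ) ≤ 2 * a)]
    · exfalso
      push_neg at hcase
      have h1 := hpar T hT
      have hL2 : v ^ 2 ≤ L * (2 * a) := (div_le_iff₀ (by linarith)).mp hL
      have haT : T * a < v := (lt_div_iff₀ ha).mp hcase
      nlinarith [hL2, hxT, h1, mul_le_mul_of_nonneg_left haT.le (mul_nonneg hT ha.le), mul_lt_mul_of_pos_right haT hv]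
  · field_simp
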